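/- Let 1 ≤ k ≤ n and let pr_{1,3} : W → W denote the projection onto span(w_1,…,w_k,w_{2n−k+1},…,w_{2n}) that kills the coordinates of w_{k+1},…,w_{2n−k}. For a k-dimensional subspace U ⊆ W, the subspace pr_{1,3}(U) is isotropic if and only if there exists a linear automorphism g of W preserving the symplectic form, with g(w_m) = w_m for all k+1 ≤ m ≤ 2n−k and g(span(w_1,…,w_k,w_{2n−k+1},…,w_{2n})) = span(w_1,…,w_k,w_{2n−k+1},…,w_{2n}), such that g(U) ⊆ span(w_1,…,w_{2n−k}). -/

import Mathlib

noncomputable section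

/-- The ambient 2n-dimensional complex vector space `W = ℂ^{2n}`. -/
abbrev Wsp (n : ℕ) := Fin (2*n) → ℂ

/-- The basis vector `w_k` (1-based index `k ∈ {1,…,2n}`). -/
def wvec (n k : ℕ) : Wsp n := fun i => if (i : ℕ) + 1 = k then 1 else 0

/-- The standard symplectic form: `⟨w_i, w_{2n+1-i}⟩ = 1` for `1 ≤ i ≤ n`,
and `⟨w_i, w_j⟩ = 0` for `j ≠ 2n+1-i`. -/
def sform (n : ℕ) (x y : Wsp n) : ℂ :=
  ∑ i : Fin (2*n), (if (i : ℕ) < n then 1 else -1) * x i *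
    y ⟨2*n - 1 - (i : ℕ), by have := i.isLt; omega⟩

/-- A subspace is isotropic if the symplectic form vanishes on it. -/
def IsIsotropic (n : ℕ) (U : Submodule ℂ (Wsp n)) : Prop :=
  ∀ u ∈ U, ∀ v ∈ U, sform n u v = 0

/-- The projection `pr_k` along `w_k` (1-based). -/
def prj (n k : ℕ) : Wsp n →ₗ[ℂ] Wsp n where
  toFun x := fun i => if (i : ℕ) + 1 = k then 0 else x i
  map_add' x y := by funext i; by_cases h : (i : ℕ) + 1 = k <;> simp [h]
  map_smul' c x := by funext i; by_cases h : (i : ℕ) + 1 = k <;> simp [h]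

/-- The subspace `W_{i,j} = span(w_1,…,w_i,w_{j+1},…,w_{2n})` (1-based). -/
def WIJ (n i j : ℕ) : Submodule ℂ (Wsp n) :=
  Submodule.span ℂ (wvec n '' {k | (1 ≤ k ∧ k ≤ i) ∨ (j + 1 ≤ k ∧ k ≤ 2*n)})

/-- Orthogonal complement with respect to the symplectic form. -/
def sperp (n : ℕ) (U : Submodule ℂ (Wsp n)) : Submodule ℂ (Wsp n) where
  carrier := {x | ∀ u ∈ U, sform n x u = 0}
  zero_mem' := by intro u hu; simp [sform]
  add_mem' := by
    intro a b ha hb u hu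
    have ha' := ha u hu
    have hb' := hb u hu
    simp only [sform, Pi.add_apply, add_mul, mul_add, Finset.sum_add_distrib] at *
    rw [ha', hb', add_zero]
  smul_mem' := by
    intro c a ha u hu
    have ha' := ha u hu
    simp only [sform, Pi.smul_apply, smul_eq_mul] at *
    calc ∑ i : Fin (2*n), (if (i : ℕ) < n then 1 else -1) * (c * a i) *
          u ⟨2*n - 1 - (i : ℕ), by have := i.isLt; omega⟩
        = c * ∑ i : Fin (2*n), (if (i : ℕ) < n then 1 else -1) * a i *
          u ⟨2*n - 1 - (i : ℕ), by have := i.isLt; omega⟩ := by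
          rw [Finset.mul_sum]; congr 1; funext i; ring
      _ = 0 := by rw [ha', mul_zero]

/-- The points of the Bott–Samelson type resolution `SpR_{2n}`:
collections `(V_{i,j})` for `1 ≤ i ≤ j`, `i+j ≤ 2n`. -/
structure IsSpR (n : ℕ) (V : ℕ → ℕ → Submodule ℂ (Wsp n)) : Prop where
  dim : ∀ i j, 1 ≤ i → i ≤ j → i + j ≤ 2*n → Module.finrank ℂ (V i j) = i
  sub : ∀ i j, 1 ≤ i → i ≤ j → i + j ≤ 2*n → V i j ≤ WIJ n i j
  mono : ∀ i j, 1 ≤ i → i + 1 ≤ j → (i + 1) + j ≤ 2*n → V i j ≤ V (i+1) j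
  proj : ∀ i j, 1 ≤ i → i ≤ j → i + (j+1) ≤ 2*n →
    Submodule.map (prj n (j+1)) (V i j) ≤ V i (j+1)
  isot : ∀ i, 1 ≤ i → i ≤ n → IsIsotropic n (V i (2*n - i))

/-- A point of `SpR_{2n}` lies in the divisor `Z_{i,j}` if
`V_{i,j} = V_{i-1,j+1} + ℂ w_{j+1}` (with `V_0 = 0`). -/
def InZ (n : ℕ) (V : ℕ → ℕ → Submodule ℂ (Wsp n)) (i j : ℕ) : Prop :=
  V i j = (if i = 1 then ⊥ else V (i-1) (j+1)) ⊔ Submodule.span ℂ {wvec n (j+1)}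

/-- The projection `pr_{1,3}` onto `span(w_1,…,w_k,w_{2n-k+1},…,w_{2n})`,
killing the coordinates of `w_{k+1},…,w_{2n-k}`. -/
def pr13 (n k : ℕ) : Wsp n →ₗ[ℂ] Wsp n where
  toFun x := fun i => if k + 1 ≤ (i : ℕ) + 1 ∧ (i : ℕ) + 1 ≤ 2*n - k then 0 else x i
  map_add' x y := by
    funext i
    by_cases h : k + 1 ≤ (i : ℕ) + 1 ∧ (i : ℕ) + 1 ≤ 2*n - k
    · simp only [Pi.add_apply, if_pos h, add_zero]
    · simp only [Pi.add_apply, if_neg h]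
  map_smul' c x := by
    funext i
    by_cases h : k + 1 ≤ (i : ℕ) + 1 ∧ (i : ℕ) + 1 ≤ 2*n - k
    · simp only [Pi.smul_apply, smul_eq_mul, if_pos h, mul_zero, RingHom.id_apply]
    · simp only [Pi.smul_apply, smul_eq_mul, if_neg h, RingHom.id_apply]

def pidx {n : ℕ} (i : Fin (2*n)) : Fin (2*n) := ⟨2*n - 1 - (i : ℕ), by have := i.isLt; omega⟩
def eps {n : ℕ} (i : Fin (2*n)) : ℂ := if (i : ℕ) < n then 1 else -1

lemma eps_ne_zero {n : ℕ} (i : Fin (2*n)) : eps i ≠ 0 := by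
  unfold eps; split <;> simp

lemma pidx_pidx {n : ℕ} (i : Fin (2*n)) : pidx (pidx i) = i := by
  have := i.isLt; simp only [pidx]; ext; simp; omega

lemma pidx_inj {n : ℕ} : Function.Injective (pidx (n := n)) := by
  intro a b h; have := congrArg pidx h; rwa [pidx_pidx, pidx_pidx] at this

lemma eps_pidx {n : ℕ} (i : Fin (2*n)) : eps (pidx i) = -eps i := by
  have := i.isLt; simp only [eps, pidx]
  by_cases h : (i : ℕ) < n
  · rw [if_pos h]; simp [show ¬ (2*n - 1 - (i:ℕ) < n) by omega]
  · rw [if_neg h]; simp [show 2*n - 1 - (i:ℕ) < n by omega]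

lemma sform_eq (n : ℕ) (x y : Wsp n) :
    sform n x y = ∑ i : Fin (2*n), eps i * x i * y (pidx i) := rfl

lemma sform_skew (n : ℕ) (x y : Wsp n) : sform n y x = - sform n x y := by
  rw [sform_eq, sform_eq, ← Finset.sum_neg_distrib]
  refine Finset.sum_nbij' (fun i => pidx i) (fun i => pidx i) (by simp) (by simp)
    (fun i _ => pidx_pidx i) (fun i _ => pidx_pidx i) ?_
  intro i _
  rw [pidx_pidx, eps_pidx]; ring

lemma sform_self (n : ℕ) (x : Wsp n) : sform n x x = 0 := by
  have h := sform_skew n x x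
  have h2 : 2 * sform n x x = 0 := by linear_combination h
  simpa using h2

/-- The bundled bilinear form. -/
def Bf (n : ℕ) : LinearMap.BilinForm ℂ (Wsp n) :=
  LinearMap.mk₂ ℂ (sform n)
    (fun x x' y => by
      simp only [sform_eq, Pi.add_apply, ← Finset.sum_add_distrib]
      exact Finset.sum_congr rfl fun i _ => by ring)
    (fun c x y => by
      simp only [sform_eq, Pi.smul_apply, smul_eq_mul, Finset.mul_sum]
      exact Finset.sum_congr rfl fun i _ => by ring)
    (fun x y y' => by
      simp only [sform_eq, Pi.add_apply, ← Finset.sum_add_distrib]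
      exact Finset.sum_congr rfl fun i _ => by ring)
    (fun c x y => by
      simp only [sform_eq, Pi.smul_apply, smul_eq_mul, Finset.mul_sum]
      exact Finset.sum_congr rfl fun i _ => by ring)

@[simp] lemma Bf_apply (n : ℕ) (x y : Wsp n) : Bf n x y = sform n x y := rfl

lemma sform_single_right (n : ℕ) (x : Wsp n) (b : Fin (2*n)) :
    sform n x (Pi.single b 1) = eps (pidx b) * x (pidx b) := by
  rw [sform_eq]
  rw [Finset.sum_eq_single (pidx b)]
  · rw [pidx_pidx, Pi.single_eq_same, mul_one]
  · intro i _ hne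
    have : pidx i ≠ b := fun h => hne (by rw [← h, pidx_pidx])
    rw [Pi.single_eq_of_ne this, mul_zero]
  · intro h; exact absurd (Finset.mem_univ _) h

lemma sform_single_left (n : ℕ) (y : Wsp n) (a : Fin (2*n)) :
    sform n (Pi.single a 1) y = eps a * y (pidx a) := by
  rw [sform_skew, sform_single_right, eps_pidx]; ring

/-- If supports are mismatched (for every i, x i = 0 or y (pidx i) = 0), the form vanishes. -/
lemma sform_eq_zero_of_supp (n : ℕ) (x y : Wsp n)
    (h : ∀ i, x i = 0 ∨ y (pidx i) = 0) : sform n x y = 0 := by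
  rw [sform_eq]
  refine Finset.sum_eq_zero fun i _ => ?_
  rcases h i with h' | h' <;> rw [h'] <;> ring

/-- Nondegeneracy. -/
lemma sform_nondeg (n : ℕ) (x : Wsp n) (h : ∀ y, sform n x y = 0) : x = 0 := by
  funext m
  have := h (Pi.single (pidx m) 1)
  rw [sform_single_right, pidx_pidx] at this
  have := mul_eq_zero.1 this
  rcases this with h' | h'
  · exact absurd h' (eps_ne_zero m)
  · exact h'

/-- Functions supported in a set `S` of indices. -/
def suppIn (n : ℕ) (S : Set (Fin (2*n))) : Submodule ℂ (Wsp n) :=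
  Submodule.pi Sᶜ (fun _ => ⊥)

lemma mem_suppIn (n : ℕ) (S : Set (Fin (2*n))) (x : Wsp n) :
    x ∈ suppIn n S ↔ ∀ m, m ∉ S → x m = 0 := by
  simp [suppIn, Submodule.mem_pi]

lemma single_mem_suppIn (n : ℕ) (S : Set (Fin (2*n))) (m : Fin (2*n)) (hm : m ∈ S) (c : ℂ) :
    Pi.single m c ∈ suppIn n S := by
  rw [mem_suppIn]
  intro l hl
  have hne : l ≠ m := fun h => hl (by rw [h]; exact hm)
  show (Pi.single m c : Wsp n) l = 0
  rw [Pi.single_apply, if_neg hne]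

lemma span_singles_eq_suppIn (n : ℕ) (S : Set (Fin (2*n))) :
    Submodule.span ℂ ((fun m => Pi.single m (1:ℂ)) '' S) = suppIn n S := by
  apply le_antisymm
  · rw [Submodule.span_le]
    rintro _ ⟨m, hm, rfl⟩
    exact single_mem_suppIn n S m hm 1
  · intro x hx
    rw [mem_suppIn] at hx
    have hxsum : x = ∑ m : Fin (2*n), Pi.single m (x m) := (Finset.univ_sum_single x).symm
    rw [hxsum]
    refine Submodule.sum_mem _ fun m _ => ?_
    by_cases hm : m ∈ S
    · have : (Pi.single m (x m) : Wsp n) = x m • (Pi.single m (1:ℂ) : Wsp n) := by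
        funext i; by_cases h : i = m <;> simp [Pi.single_apply, h]
      rw [this]
      exact Submodule.smul_mem _ _ (Submodule.subset_span ⟨m, hm, rfl⟩)
    · rw [hx m hm]
      simp

lemma wvec_eq_single (n : ℕ) (m : Fin (2*n)) : wvec n ((m:ℕ)+1) = Pi.single m (1:ℂ) := by
  funext i
  simp only [wvec, Pi.single_apply]
  by_cases h : i = m
  · subst h; simp
  · rw [if_neg (fun hh => h (Fin.ext (by omega))), if_neg h]

lemma WIJ_eq_suppIn (n i j : ℕ) (hij : i ≤ j) (hj : j ≤ 2*n) :
    WIJ n i j = suppIn n {m : Fin (2*n) | (m:ℕ) < i ∨ j ≤ (m:ℕ)} := by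
  apply le_antisymm
  · rw [WIJ, Submodule.span_le]
    rintro _ ⟨m', hm', rfl⟩
    have h2n : 0 < 2*n := by rcases hm' with ⟨h1,h2⟩|⟨h1,h2⟩ <;> omega
    have hm'lt : m' - 1 < 2*n := by rcases hm' with ⟨h1,h2⟩|⟨h1,h2⟩ <;> omega
    have heq : wvec n m' = Pi.single (⟨m'-1, hm'lt⟩ : Fin (2*n)) (1:ℂ) := by
      have h1 : 1 ≤ m' := by rcases hm' with ⟨h1,h2⟩|⟨h1,h2⟩ <;> omega
      funext i
      simp only [wvec, Pi.single_apply]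
      by_cases h : (i:ℕ) + 1 = m'
      · rw [if_pos h, if_pos (Fin.ext (by simp; omega))]
      · rw [if_neg h, if_neg (fun hh => h (by have := congrArg Fin.val hh; simp at this; omega))]
    rw [heq]
    apply single_mem_suppIn
    show (m' - 1 < i) ∨ (j ≤ m' - 1)
    rcases hm' with ⟨h1,h2⟩|⟨h1,h2⟩
    · left; omega
    · right; omega
  · rw [← span_singles_eq_suppIn, Submodule.span_le]
    rintro _ ⟨m, hm, rfl⟩
    rw [WIJ]
    apply Submodule.subset_span
    refine ⟨(m:ℕ)+1, ?_, wvec_eq_single n m⟩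
    have := m.isLt
    rcases hm with h | h
    · exact Or.inl ⟨by omega, by omega⟩
    · exact Or.inr ⟨by omega, by omega⟩

open Module in
/-- Symplectic Gram–Schmidt: any isotropic subspace extends to the `e`-part of a
symplectic spanning family. -/
lemma symp_ind (d : ℕ) : ∀ (V : Type) [AddCommGroup V] [Module ℂ V] [FiniteDimensional ℂ V],
    finrank ℂ V = d →
    ∀ (B : LinearMap.BilinForm ℂ V), (∀ x, B x x = 0) →
    (∀ x, (∀ y, B x y = 0) → x = 0) →
    ∀ (P : Submodule ℂ V), (∀ x ∈ P, ∀ y ∈ P, B x y = 0) →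
    ∃ (m : ℕ) (e f : Fin m → V),
      (∀ i j, B (e i) (e j) = 0) ∧ (∀ i j, B (f i) (f j) = 0) ∧
      (∀ i j, B (e i) (f j) = if i = j then 1 else 0) ∧
      Submodule.span ℂ (Set.range e ∪ Set.range f) = ⊤ ∧
      P ≤ Submodule.span ℂ (Set.range e) := by
  induction d using Nat.strong_induction_on with
  | _ d IH =>
  intro V instG instM instF hd B halt hnd P hP
  have hskew : ∀ x y : V, B y x = - B x y := by
    intro x y
    have h := halt (x + y)
    simp only [map_add, LinearMap.add_apply] at h
    linear_combination h - halt x - halt y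
  by_cases hd0 : d = 0
  · refine ⟨0, Fin.elim0, Fin.elim0, fun i => i.elim0, fun i => i.elim0, fun i => i.elim0, ?_, ?_⟩
    · have : Subsingleton V := finrank_zero_iff.mp (by rw [hd, hd0])
      rw [eq_top_iff]
      intro x _
      rw [Subsingleton.elim x 0]
      exact Submodule.zero_mem _
    · intro x hx
      have : Subsingleton V := finrank_zero_iff.mp (by rw [hd, hd0])
      rw [Subsingleton.elim x 0]
      exact Submodule.zero_mem _
  -- pick e₁
  obtain ⟨e₁, he₁P, he₁ne⟩ : ∃ e₁ : V, (P = ⊥ ∨ e₁ ∈ P) ∧ e₁ ≠ 0 := by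
    by_cases hPbot : P = ⊥
    · have hnt : ¬ Subsingleton V := fun h => hd0 (by rw [← hd, finrank_zero_iff.mpr h])
      rw [not_subsingleton_iff_nontrivial] at hnt
      obtain ⟨x, hx⟩ := exists_ne (0 : V)
      exact ⟨x, Or.inl hPbot, hx⟩
    · obtain ⟨x, hxP, hx0⟩ := (Submodule.ne_bot_iff P).1 hPbot
      exact ⟨x, Or.inr hxP, hx0⟩
  -- pick f₁ with B e₁ f₁ = 1
  obtain ⟨f₀, hf₀⟩ : ∃ y, B e₁ y ≠ 0 := by
    by_contra h
    push_neg at h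
    exact he₁ne (hnd e₁ h)
  set f₁ : V := (B e₁ f₀)⁻¹ • f₀ with hf₁def
  have hBef : B e₁ f₁ = 1 := by
    rw [hf₁def, map_smul, smul_eq_mul, inv_mul_cancel₀ hf₀]
  have hBfe : B f₁ e₁ = -1 := by rw [hskew, hBef]
  set V' : Submodule ℂ V := LinearMap.ker (B e₁) ⊓ LinearMap.ker (B f₁) with hV'def
  have mem_V' : ∀ x : V, x ∈ V' ↔ B e₁ x = 0 ∧ B f₁ x = 0 := by
    intro x; simp [hV'def, Submodule.mem_inf, LinearMap.mem_ker]
  have hdecomp : ∀ y : V, y - (-(B f₁ y)) • e₁ - (B e₁ y) • f₁ ∈ V' := by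
    intro y
    rw [mem_V']
    constructor
    · simp only [map_sub, map_smul, smul_eq_mul]
      rw [halt e₁, hBef]; ring
    · simp only [map_sub, map_smul, smul_eq_mul]
      rw [halt f₁, hBfe]; ring
  have hV'ne : V' ≠ ⊤ := by
    intro h
    have : e₁ ∈ V' := h ▸ Submodule.mem_top
    rw [mem_V'] at this
    rw [this.2] at hBfe
    norm_num at hBfe
  have hrank : finrank ℂ ↥V' < d := by
    rw [← hd]
    exact Submodule.finrank_lt hV'ne
  set B' : LinearMap.BilinForm ℂ ↥V' := B.restrict V' with hB'def
  have hB'apply : ∀ x y : ↥V', B' x y = B ↑x ↑y := fun x y => rfl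
  have halt' : ∀ x : ↥V', B' x x = 0 := fun x => halt ↑x
  have hnd' : ∀ x : ↥V', (∀ y : ↥V', B' x y = 0) → x = 0 := by
    intro x hx
    have hx1 := ((mem_V' ↑x).1 x.2).1
    have hx2 := ((mem_V' ↑x).1 x.2).2
    have : (x : V) = 0 := by
      apply hnd
      intro y
      have hy' := hdecomp y
      set y' := y - (-(B f₁ y)) • e₁ - (B e₁ y) • f₁ with hy'def
      have : y = (-(B f₁ y)) • e₁ + (B e₁ y) • f₁ + y' := by rw [hy'def]; abel
      rw [this]
      simp only [map_add, map_smul, smul_eq_mul]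
      have h1 : B ↑x e₁ = 0 := by rw [hskew e₁ ↑x, hx1]; ring
      have h2 : B ↑x f₁ = 0 := by rw [hskew f₁ ↑x, hx2]; ring
      have h3 : B ↑x y' = 0 := hx ⟨y', hy'⟩
      rw [h1, h2, h3]; ring
    exact Subtype.ext this
  set P' : Submodule ℂ ↥V' := P.comap V'.subtype with hP'def
  have hP' : ∀ x ∈ P', ∀ y ∈ P', B' x y = 0 := by
    intro x hx y hy
    exact hP ↑x hx ↑y hy
  obtain ⟨m', e', f', hee, hff, hef, hspan', hP'le⟩ :=
    IH (finrank ℂ ↥V') hrank ↥V' rfl B' halt' hnd' P' hP'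
  -- lifted facts
  have he'V : ∀ i, ((e' i : V) ∈ V') := fun i => (e' i).2
  have hf'V : ∀ i, ((f' i : V) ∈ V') := fun i => (f' i).2
  refine ⟨m' + 1, Fin.cons e₁ (fun i => ↑(e' i)), Fin.cons f₁ (fun i => ↑(f' i)), ?_, ?_, ?_, ?_, ?_⟩
  · intro i j
    refine Fin.cases ?_ (fun i' => ?_) i <;> refine Fin.cases ?_ (fun j' => ?_) j
    · simpa using halt e₁
    · simpa using ((mem_V' _).1 (he'V j')).1
    · simp only [Fin.cons_succ, Fin.cons_zero]
      rw [hskew]; rw [((mem_V' _).1 (he'V i')).1]; ring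
    · simpa [hB'apply] using hee i' j'
  · intro i j
    refine Fin.cases ?_ (fun i' => ?_) i <;> refine Fin.cases ?_ (fun j' => ?_) j
    · simpa using halt f₁
    · simpa using ((mem_V' _).1 (hf'V j')).2
    · simp only [Fin.cons_succ, Fin.cons_zero]
      rw [hskew]; rw [((mem_V' _).1 (hf'V i')).2]; ring
    · simpa [hB'apply] using hff i' j'
  · intro i j
    refine Fin.cases ?_ (fun i' => ?_) i <;> refine Fin.cases ?_ (fun j' => ?_) j
    · simpa using hBef
    · simp only [Fin.cons_succ, Fin.cons_zero]
      rw [((mem_V' _).1 (hf'V j')).1, if_neg (Fin.succ_ne_zero j').symm]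
    · simp only [Fin.cons_succ, Fin.cons_zero]
      rw [hskew, ((mem_V' _).1 (he'V i')).2, if_neg (Fin.succ_ne_zero i')]
      ring
    · simp only [Fin.cons_succ]
      rw [show (B ↑(e' i')) ↑(f' j') = (B' (e' i')) (f' j') from rfl, hef i' j']
      by_cases h : i' = j'
      · rw [if_pos h, if_pos (by rw [h])]
      · rw [if_neg h, if_neg (fun hh => h (Fin.succ_injective _ hh))]
  · rw [eq_top_iff]
    intro y _
    have hy' := hdecomp y
    set y' := y - (-(B f₁ y)) • e₁ - (B e₁ y) • f₁ with hy'def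
    have hysum : y = (-(B f₁ y)) • e₁ + (B e₁ y) • f₁ + y' := by rw [hy'def]; abel
    have hy'mem : y' ∈ Submodule.span ℂ
        (Set.range (Fin.cons e₁ (fun i => ↑(e' i)) : Fin (m'+1) → V) ∪
         Set.range (Fin.cons f₁ (fun i => ↑(f' i)) : Fin (m'+1) → V)) := by
      have h1 : (⟨y', hy'⟩ : ↥V') ∈ Submodule.span ℂ (Set.range e' ∪ Set.range f') := by
        rw [hspan']; trivial
      have h2 : y' ∈ Submodule.map V'.subtype
          (Submodule.span ℂ (Set.range e' ∪ Set.range f')) :=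
        ⟨⟨y', hy'⟩, h1, rfl⟩
      rw [Submodule.map_span] at h2
      refine Submodule.span_mono ?_ h2
      rintro _ ⟨_, (⟨i, rfl⟩ | ⟨i, rfl⟩), rfl⟩
      · exact Or.inl ⟨i.succ, (Fin.cons_succ _ _ i).symm ▸ rfl⟩
      · exact Or.inr ⟨i.succ, (Fin.cons_succ _ _ i).symm ▸ rfl⟩
    rw [hysum]
    refine Submodule.add_mem _ (Submodule.add_mem _ ?_ ?_) hy'mem
    · exact Submodule.smul_mem _ _ (Submodule.subset_span (Or.inl ⟨0, Fin.cons_zero _ _⟩))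
    · exact Submodule.smul_mem _ _ (Submodule.subset_span (Or.inr ⟨0, Fin.cons_zero _ _⟩))
  · rcases he₁P with hPbot | he₁mem
    · rw [hPbot]; exact bot_le
    · intro p hp
      have hb : B e₁ p = 0 := hP e₁ he₁mem p hp
      have hp' := hdecomp p
      set p' := p - (-(B f₁ p)) • e₁ - (B e₁ p) • f₁ with hp'def
      have hp'P : p' ∈ P := by
        rw [hp'def, hb, zero_smul, sub_zero]
        exact Submodule.sub_mem _ hp (Submodule.smul_mem _ _ he₁mem)
      have h1 : (⟨p', hp'⟩ : ↥V') ∈ P' := hp'P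
      have h2 := hP'le h1
      have h3 : p' ∈ Submodule.map V'.subtype (Submodule.span ℂ (Set.range e')) :=
        ⟨⟨p', hp'⟩, h2, rfl⟩
      rw [Submodule.map_span] at h3
      have h4 : p' ∈ Submodule.span ℂ
          (Set.range (Fin.cons e₁ (fun i => ↑(e' i)) : Fin (m'+1) → V)) := by
        refine Submodule.span_mono ?_ h3
        rintro _ ⟨_, ⟨i, rfl⟩, rfl⟩
        exact ⟨i.succ, (Fin.cons_succ _ _ i).symm ▸ rfl⟩
      have hpsum : p = (-(B f₁ p)) • e₁ + p' := by
        rw [hp'def, hb, zero_smul, sub_zero]; abel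
      rw [hpsum]
      refine Submodule.add_mem _ ?_ h4
      exact Submodule.smul_mem _ _ (Submodule.subset_span ⟨0, Fin.cons_zero _ _⟩)

lemma symp_indep {V : Type} [AddCommGroup V] [Module ℂ V] (B : LinearMap.BilinForm ℂ V)
    {m : ℕ} {e f : Fin m → V}
    (hee : ∀ i j, B (e i) (e j) = 0) (hff : ∀ i j, B (f i) (f j) = 0)
    (hef : ∀ i j, B (e i) (f j) = if i = j then 1 else 0) :
    LinearIndependent ℂ (Sum.elim e f) := by
  rw [Fintype.linearIndependent_iff]
  intro g hg
  rw [Fintype.sum_sum_type] at hg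
  simp only [Sum.elim_inl, Sum.elim_inr] at hg
  have kA : ∀ j, g (.inl j) = 0 := by
    intro j
    have h1 := congrArg (fun x : V => B x (f j)) hg
    simp only [map_add, LinearMap.add_apply, map_sum, LinearMap.sum_apply, map_smul,
      LinearMap.smul_apply, smul_eq_mul, map_zero, LinearMap.zero_apply] at h1
    simp only [hef, hff] at h1
    simp only [mul_ite, mul_one, mul_zero, Finset.sum_ite_eq', Finset.mem_univ, if_true,
      Finset.sum_const_zero, add_zero] at h1
    exact h1
  have kB : ∀ j, g (.inr j) = 0 := by
    intro j
    have h1 := congrArg (fun x : V => B (e j) x) hg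
    simp only [map_add, map_sum, map_smul, smul_eq_mul, map_zero] at h1
    simp only [hee, hef] at h1
    simp only [mul_ite, mul_one, mul_zero, Finset.sum_ite_eq, Finset.mem_univ, if_true,
      Finset.sum_const_zero, zero_add] at h1
    exact h1
  intro i
  cases i with
  | inl i => exact kA i
  | inr i => exact kB i


lemma sform_single_single (n : ℕ) (a b : Fin (2*n)) :
    sform n (Pi.single a 1) (Pi.single b 1) = eps a * (if pidx a = b then (1:ℂ) else 0) := by
  rw [sform_single_left, Pi.single_apply]

lemma single_congr {n : ℕ} {a b : Fin (2*n)} (h : (a:ℕ) = (b:ℕ)) :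
    (Pi.single a 1 : Wsp n) = Pi.single b 1 := by
  have hab : a = b := Fin.ext h
  rw [hab]

lemma pr13_apply (n k : ℕ) (x : Wsp n) (m : Fin (2*n)) :
    pr13 n k x m = if k ≤ (m:ℕ) ∧ (m:ℕ) < 2*n - k then 0 else x m := by
  show (if k + 1 ≤ (m:ℕ) + 1 ∧ (m:ℕ) + 1 ≤ 2*n - k then 0 else x m) = _
  by_cases h : k ≤ (m:ℕ) ∧ (m:ℕ) < 2*n - k
  · rw [if_pos (by omega), if_pos h]
  · rw [if_neg (by omega), if_neg h]

lemma sform_compl_zero (n : ℕ) (S : Set (Fin (2*n))) (hS : ∀ a ∈ S, pidx a ∈ S)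
    (x y : Wsp n) (hx : x ∈ suppIn n S) (hy : y ∈ suppIn n Sᶜ) : sform n x y = 0 := by
  apply sform_eq_zero_of_supp
  intro i
  by_cases hi : i ∈ S
  · exact Or.inr ((mem_suppIn n Sᶜ y).1 hy (pidx i) (fun hmem => hmem (hS i hi)))
  · exact Or.inl ((mem_suppIn n S x).1 hx i hi)

lemma sform_compl_zero' (n : ℕ) (S : Set (Fin (2*n))) (hS : ∀ a ∈ S, pidx a ∈ S)
    (x y : Wsp n) (hx : x ∈ suppIn n Sᶜ) (hy : y ∈ suppIn n S) : sform n x y = 0 := by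
  apply sform_eq_zero_of_supp
  intro i
  by_cases hi : i ∈ S
  · exact Or.inl ((mem_suppIn n Sᶜ x).1 hx i (fun hmem => hmem hi))
  · refine Or.inr ((mem_suppIn n S y).1 hy (pidx i) ?_)
    intro hmem
    exact hi (by rw [← pidx_pidx i]; exact hS _ hmem)

theorem statement0 (n k : ℕ) (hn : 1 ≤ n) (hk1 : 1 ≤ k) (hkn : k ≤ n)
    (U : Submodule ℂ (Wsp n)) (hU : Module.finrank ℂ U = k) :
    IsIsotropic n (Submodule.map (pr13 n k) U) ↔
      ∃ g : Wsp n ≃ₗ[ℂ] Wsp n,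
        (∀ x y : Wsp n, sform n (g x) (g y) = sform n x y) ∧
        (∀ m, k + 1 ≤ m → m ≤ 2*n - k → g (wvec n m) = wvec n m) ∧
        Submodule.map (g : Wsp n →ₗ[ℂ] Wsp n) (WIJ n k (2*n - k)) = WIJ n k (2*n - k) ∧
        Submodule.map (g : Wsp n →ₗ[ℂ] Wsp n) U ≤ WIJ n (2*n - k) (2*n)  := by
  have hn2 : 1 ≤ 2*n := by omega
  have hk2n : k ≤ 2*n := by omega
  set Sc : Set (Fin (2*n)) := {m : Fin (2*n) | (m:ℕ) < k ∨ 2*n - k ≤ (m:ℕ)} with hScdef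
  have hSc_pidx : ∀ a ∈ Sc, pidx a ∈ Sc := by
    intro a ha
    have hlt := a.isLt
    simp only [hScdef, Set.mem_setOf_eq, pidx, Fin.val_mk] at ha ⊢
    omega
  have hcorner : WIJ n k (2*n - k) = suppIn n Sc :=
    WIJ_eq_suppIn n k (2*n-k) (by omega) (by omega)
  have hpr13mem : ∀ x : Wsp n, pr13 n k x ∈ suppIn n Sc := by
    intro x
    rw [mem_suppIn]
    intro m hm
    simp only [hScdef, Set.mem_setOf_eq] at hm
    rw [pr13_apply, if_pos (by omega)]
  have hmidmem : ∀ x : Wsp n, x - pr13 n k x ∈ suppIn n Scᶜ := by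
    intro x
    rw [mem_suppIn]
    intro m hm
    simp only [Set.mem_compl_iff, hScdef, Set.mem_setOf_eq, not_not] at hm
    show x m - pr13 n k x m = 0
    rw [pr13_apply, if_neg (by omega), sub_self]
  constructor
  · -- hard direction
    intro hiso
    set corner := WIJ n k (2*n - k) with hcornerdef
    have hmaple : Submodule.map (pr13 n k) U ≤ corner := by
      rintro _ ⟨u, hu, rfl⟩
      show (pr13 n k) u ∈ corner
      rw [hcorner]; exact hpr13mem u
    set Bc := (Bf n).restrict corner with hBcdef
    have hBcapply : ∀ x y : ↥corner, Bc x y = sform n ↑x ↑y := fun x y => rfl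
    have haltc : ∀ x : ↥corner, Bc x x = 0 := fun x => sform_self n ↑x
    have hndc : ∀ x : ↥corner, (∀ y : ↥corner, Bc x y = 0) → x = 0 := by
      intro x hx
      have hxc : (x : Wsp n) ∈ suppIn n Sc := by rw [← hcorner]; exact x.2
      apply Subtype.ext
      show (x : Wsp n) = ((0 : ↥corner) : Wsp n)
      rw [ZeroMemClass.coe_zero]
      funext m
      show (x : Wsp n) m = 0
      by_cases hm : m ∈ Sc
      · have hy : (Pi.single (pidx m) 1 : Wsp n) ∈ corner := by
          rw [hcorner]; exact single_mem_suppIn n Sc _ (hSc_pidx m hm) 1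
        have h0 := hx ⟨_, hy⟩
        rw [hBcapply] at h0
        rw [sform_single_right, pidx_pidx] at h0
        rcases mul_eq_zero.1 h0 with h | h
        · exact absurd h (eps_ne_zero m)
        · exact h
      · exact (mem_suppIn n Sc _).1 hxc m hm
    set Pc : Submodule ℂ ↥corner := (Submodule.map (pr13 n k) U).comap corner.subtype with hPcdef
    have hPciso : ∀ x ∈ Pc, ∀ y ∈ Pc, Bc x y = 0 := by
      intro x hx y hy
      exact hiso ↑x hx ↑y hy
    obtain ⟨m, e, f, hee, hff, hef, hspan, hPle⟩ :=
      symp_ind (Module.finrank ℂ ↥corner) ↥corner rfl Bc haltc hndc Pc hPciso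
    -- corner standard vectors
    set cE : Fin k → Wsp n := fun i => Pi.single ⟨(i:ℕ), by have := i.isLt; omega⟩ 1 with hcEdef
    set cF : Fin k → Wsp n := fun i => Pi.single ⟨2*n - 1 - (i:ℕ), by omega⟩ 1 with hcFdef
    have hcEF_eq : Sum.elim cE cF = (Pi.basisFun ℂ (Fin (2*n))) ∘
        (Sum.elim (fun i : Fin k => (⟨(i:ℕ), by have := i.isLt; omega⟩ : Fin (2*n)))
                  (fun i : Fin k => (⟨2*n - 1 - (i:ℕ), by omega⟩ : Fin (2*n)))) := by
      funext s
      rcases s with i | i <;>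
        simp [hcEdef, hcFdef, Pi.basisFun_apply]
    have hindepC : LinearIndependent ℂ (Sum.elim cE cF) := by
      rw [hcEF_eq]
      apply (Pi.basisFun ℂ (Fin (2*n))).linearIndependent.comp
      rintro (a | a) (b | b) hab <;>
        simp only [Sum.elim_inl, Sum.elim_inr, Fin.mk.injEq] at hab
      · exact congrArg Sum.inl (Fin.ext hab)
      · exact absurd hab (by have := a.isLt; have := b.isLt; omega)
      · exact absurd hab (by have := a.isLt; have := b.isLt; omega)
      · exact congrArg Sum.inr (Fin.ext (by have := a.isLt; have := b.isLt; omega))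
    have hspanC : Submodule.span ℂ (Set.range cE ∪ Set.range cF) = corner := by
      apply le_antisymm
      · rw [Submodule.span_le]
        rintro _ (⟨i, rfl⟩ | ⟨i, rfl⟩)
        · rw [SetLike.mem_coe, hcorner]
          exact single_mem_suppIn n Sc _
            (by simp only [hScdef, Set.mem_setOf_eq, Fin.val_mk]; left; exact i.isLt) 1
        · rw [SetLike.mem_coe, hcorner]
          exact single_mem_suppIn n Sc _
            (by simp only [hScdef, Set.mem_setOf_eq, Fin.val_mk]; right; have := i.isLt; omega) 1
      · rw [hcorner, ← span_singles_eq_suppIn, Submodule.span_le]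
        rintro _ ⟨mm, hmm, rfl⟩
        simp only [hScdef, Set.mem_setOf_eq] at hmm
        apply SetLike.mem_coe.2
        rcases hmm with h | h
        · refine Submodule.subset_span (Or.inl ⟨⟨(mm:ℕ), h⟩, ?_⟩)
          all_goals exact single_congr (by simp only [Fin.val_mk])
        · refine Submodule.subset_span (Or.inr ⟨⟨2*n - 1 - (mm:ℕ), by omega⟩, ?_⟩)
          all_goals exact single_congr (by simp only [Fin.val_mk]; have := mm.isLt; omega)
    have hfr1 : Module.finrank ℂ ↥corner = k + k := by
      have h := finrank_span_eq_card hindepC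
      rw [Set.Sum.elim_range, hspanC] at h
      simpa using h
    have hfr2 : Module.finrank ℂ ↥corner = m + m := by
      have hb : Module.Basis (Fin m ⊕ Fin m) ℂ ↥corner :=
        Module.Basis.mk (symp_indep Bc hee hff hef) (by rw [Set.Sum.elim_range]; exact hspan.ge)
      rw [Module.finrank_eq_card_basis hb]
      simp
    obtain rfl : k = m := by omega
    -- families in the ambient space
    set E : Fin k → Wsp n := fun i => ((e i : ↥corner) : Wsp n) with hEdef
    set F : Fin k → Wsp n := fun i => ((f i : ↥corner) : Wsp n) with hFdef
    set M : Fin (2*n - 2*k) → Wsp n :=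
      fun l => Pi.single ⟨k + (l:ℕ), by have := l.isLt; omega⟩ 1 with hMdef
    set vvS := Sum.elim (Sum.elim E F) M with hvvSdef
    set vvT := Sum.elim (Sum.elim cE cF) M with hvvTdef
    have hEmem : ∀ i, E i ∈ suppIn n Sc := fun i => by
      rw [← hcorner]; exact (e i).2
    have hFmem : ∀ i, F i ∈ suppIn n Sc := fun i => by
      rw [← hcorner]; exact (f i).2
    have hMmem : ∀ l, M l ∈ suppIn n Scᶜ := by
      intro l
      apply single_mem_suppIn
      simp only [Set.mem_compl_iff, hScdef, Set.mem_setOf_eq, Fin.val_mk]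
      have := l.isLt; omega
    have hcEmem : ∀ i, cE i ∈ suppIn n Sc := by
      intro i
      apply single_mem_suppIn
      simp only [hScdef, Set.mem_setOf_eq, Fin.val_mk]
      left; exact i.isLt
    have hcFmem : ∀ i, cF i ∈ suppIn n Sc := by
      intro i
      apply single_mem_suppIn
      simp only [hScdef, Set.mem_setOf_eq, Fin.val_mk]
      right; have := i.isLt; omega
    have hcornerspan : corner = Submodule.span ℂ (Set.range E ∪ Set.range F) := by
      have h := congrArg (Submodule.map corner.subtype) hspan
      rw [Submodule.map_span, Submodule.map_subtype_top] at h
      rw [← h]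
      congr 1
      rw [Set.image_union]
      congr 1
      · rw [← Set.range_comp]; rfl
      · rw [← Set.range_comp]; rfl
    have hmidspan : suppIn n Scᶜ = Submodule.span ℂ (Set.range M) := by
      rw [← span_singles_eq_suppIn]
      congr 1
      ext x
      constructor
      · rintro ⟨mm, hmm, rfl⟩
        simp only [Set.mem_compl_iff, hScdef, Set.mem_setOf_eq] at hmm
        refine ⟨⟨(mm:ℕ) - k, by have := mm.isLt; omega⟩, ?_⟩
        all_goals exact single_congr (by simp only [Fin.val_mk]; omega)
      · rintro ⟨l, rfl⟩
        refine ⟨⟨k + (l:ℕ), by have := l.isLt; omega⟩, ?_, rfl⟩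
        simp only [Set.mem_compl_iff, hScdef, Set.mem_setOf_eq, Fin.val_mk]
        have := l.isLt; omega
    have hrangevvS : Set.range vvS = (Set.range E ∪ Set.range F) ∪ Set.range M := by
      rw [hvvSdef, Set.Sum.elim_range, Set.Sum.elim_range]
    have hWspan : ⊤ ≤ Submodule.span ℂ (Set.range vvS) := by
      intro x _
      have hx1 : pr13 n k x ∈ Submodule.span ℂ (Set.range E ∪ Set.range F) := by
        rw [← hcornerspan, hcorner]; exact hpr13mem x
      have hx2 : x - pr13 n k x ∈ Submodule.span ℂ (Set.range M) := by
        rw [← hmidspan]; exact hmidmem x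
      have hxx : x = pr13 n k x + (x - pr13 n k x) := by abel
      rw [hxx, hrangevvS]
      exact Submodule.add_mem _
        (Submodule.span_mono Set.subset_union_left hx1)
        (Submodule.span_mono Set.subset_union_right hx2)
    have hWspanT : ⊤ ≤ Submodule.span ℂ (Set.range vvT) := by
      intro x _
      have hx : x ∈ suppIn n (Set.univ : Set (Fin (2*n))) := by
        rw [mem_suppIn]; intro mm hmm; exact absurd (Set.mem_univ mm) hmm
      rw [← span_singles_eq_suppIn] at hx
      refine Submodule.span_mono ?_ hx
      rintro _ ⟨mm, -, rfl⟩
      by_cases h1 : (mm:ℕ) < k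
      · refine ⟨Sum.inl (Sum.inl ⟨(mm:ℕ), h1⟩), ?_⟩
        simp only [hvvTdef, Sum.elim_inl, hcEdef]
        all_goals exact single_congr (by simp only [Fin.val_mk])
      · by_cases h2 : (mm:ℕ) < 2*n - k
        · refine ⟨Sum.inr ⟨(mm:ℕ) - k, by have := mm.isLt; omega⟩, ?_⟩
          simp only [hvvTdef, Sum.elim_inr, hMdef]
          all_goals exact single_congr (by simp only [Fin.val_mk]; omega)
        · refine ⟨Sum.inl (Sum.inr ⟨2*n - 1 - (mm:ℕ), by omega⟩), ?_⟩
          simp only [hvvTdef, Sum.elim_inl, hcFdef]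
          all_goals exact single_congr (by simp only [Fin.val_mk]; have := mm.isLt; omega)
    have hcardS : Fintype.card ((Fin k ⊕ Fin k) ⊕ Fin (2*n - 2*k)) =
        Module.finrank ℂ (Wsp n) := by
      simp only [Fintype.card_sum, Fintype.card_fin, Module.finrank_fin_fun]
      omega
    let bS : Module.Basis ((Fin k ⊕ Fin k) ⊕ Fin (2*n - 2*k)) ℂ (Wsp n) :=
      basisOfTopLeSpanOfCardEqFinrank vvS hWspan hcardS
    let bT : Module.Basis ((Fin k ⊕ Fin k) ⊕ Fin (2*n - 2*k)) ℂ (Wsp n) :=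
      basisOfTopLeSpanOfCardEqFinrank vvT hWspanT hcardS
    have hbS : ⇑bS = vvS := coe_basisOfTopLeSpanOfCardEqFinrank _ _ _
    have hbT : ⇑bT = vvT := coe_basisOfTopLeSpanOfCardEqFinrank _ _ _
    let gg : Wsp n ≃ₗ[ℂ] Wsp n := bS.equiv bT (Equiv.refl _)
    have hgapply : ∀ idx, gg (vvS idx) = vvT idx := by
      intro idx
      rw [← congrFun hbS idx]
      show (bS.equiv bT (Equiv.refl _)) (bS idx) = vvT idx
      rw [Module.Basis.equiv_apply, Equiv.refl_apply, congrFun hbT idx]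
    -- value tables
    have hee' : ∀ i j, sform n (E i) (E j) = 0 := fun i j => hee i j
    have hff' : ∀ i j, sform n (F i) (F j) = 0 := fun i j => hff i j
    have hef' : ∀ i j, sform n (E i) (F j) = if i = j then 1 else 0 := fun i j => hef i j
    have hform : ∀ x y : Wsp n, sform n (gg x) (gg y) = sform n x y := by
      have hBeq : (Bf n).compl₁₂ (gg : Wsp n →ₗ[ℂ] Wsp n) (gg : Wsp n →ₗ[ℂ] Wsp n) = Bf n := by
        apply LinearMap.ext_basis bS bS
        intro i j
        rw [LinearMap.compl₁₂_apply]
        rw [congrFun hbS i, congrFun hbS j]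
        show Bf n (gg (vvS i)) (gg (vvS j)) = Bf n (vvS i) (vvS j)
        rw [hgapply i, hgapply j]
        show sform n (vvT i) (vvT j) = sform n (vvS i) (vvS j)
        rcases i with (i | i) | i <;> rcases j with (j | j) | j <;>
          simp only [hvvSdef, hvvTdef, Sum.elim_inl, Sum.elim_inr]
        · -- cE cE vs E E
          rw [hee' i j, hcEdef, sform_single_single, if_neg, mul_zero]
          intro h
          rw [Fin.ext_iff] at h
          simp only [pidx, Fin.val_mk] at h
          have := i.isLt; have := j.isLt; omega
        · -- cE cF vs E F
          rw [hef' i j, hcEdef, hcFdef, sform_single_single]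
          by_cases h : i = j
          · subst h
            rw [if_pos (Fin.ext (by simp only [pidx, Fin.val_mk]))]
            rw [if_pos rfl]
            show (if ((⟨(i:ℕ), _⟩ : Fin (2*n)) : ℕ) < n then (1:ℂ) else -1) * 1 = 1
            rw [if_pos (by simp only [Fin.val_mk]; omega)]
            ring
          · rw [if_neg, if_neg h, mul_zero]
            intro hcon
            rw [Fin.ext_iff] at hcon
            simp only [pidx, Fin.val_mk] at hcon
            exact h (Fin.ext (by have := i.isLt; have := j.isLt; omega))
        · -- cE M vs E M
          rw [sform_compl_zero n Sc hSc_pidx _ _ (hEmem i) (hMmem j),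
              sform_compl_zero n Sc hSc_pidx _ _ (hcEmem i) (hMmem j)]
        · -- cF cE vs F E
          rw [sform_skew n (E j) (F i), hef' j i, hcFdef, hcEdef, sform_single_single]
          by_cases h : i = j
          · subst h
            rw [if_pos (Fin.ext (by simp only [pidx, Fin.val_mk]; have := i.isLt; omega))]
            rw [if_pos rfl]
            show (if ((⟨2*n - 1 - (i:ℕ), _⟩ : Fin (2*n)) : ℕ) < n then (1:ℂ) else -1) * 1 = -1
            rw [if_neg (by simp only [Fin.val_mk]; have := i.isLt; omega)]
            ring
          · rw [if_neg, if_neg (fun hc => h hc.symm), mul_zero, neg_zero]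
            intro hcon
            rw [Fin.ext_iff] at hcon
            simp only [pidx, Fin.val_mk] at hcon
            exact h (Fin.ext (by have := i.isLt; have := j.isLt; omega))
        · -- cF cF vs F F
          rw [hff' i j, hcFdef, sform_single_single, if_neg, mul_zero]
          intro h
          rw [Fin.ext_iff] at h
          simp only [pidx, Fin.val_mk] at h
          have := i.isLt; have := j.isLt; omega
        · -- cF M vs F M
          rw [sform_compl_zero n Sc hSc_pidx _ _ (hFmem i) (hMmem j),
              sform_compl_zero n Sc hSc_pidx _ _ (hcFmem i) (hMmem j)]
        · -- M cE vs M E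
          rw [sform_compl_zero' n Sc hSc_pidx _ _ (hMmem i) (hEmem j),
              sform_compl_zero' n Sc hSc_pidx _ _ (hMmem i) (hcEmem j)]
        · -- M cF vs M F
          rw [sform_compl_zero' n Sc hSc_pidx _ _ (hMmem i) (hFmem j),
              sform_compl_zero' n Sc hSc_pidx _ _ (hMmem i) (hcFmem j)]
      intro x y
      have h := LinearMap.congr_fun (LinearMap.congr_fun hBeq x) y
      rw [LinearMap.compl₁₂_apply] at h
      exact h
    have hggmid : ∀ x ∈ Submodule.span ℂ (Set.range M), gg x = x := by
      intro x hx
      have h := LinearMap.eqOn_span (s := Set.range M)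
        (f := (gg : Wsp n →ₗ[ℂ] Wsp n)) (g := (LinearMap.id : Wsp n →ₗ[ℂ] Wsp n)) ?_ hx
      · simpa using h
      · rintro _ ⟨l, rfl⟩
        show gg (M l) = M l
        exact hgapply (Sum.inr l)
    refine ⟨gg, hform, ?_, ?_, ?_⟩
    · -- fixes middle basis vectors
      intro mm h1 h2
      have hlt : mm - 1 < 2*n := by omega
      have hwv : wvec n mm = M ⟨mm - 1 - k, by omega⟩ := by
        have h3 : mm = ((⟨mm - 1, hlt⟩ : Fin (2*n)) : ℕ) + 1 := by
          simp only [Fin.val_mk]; omega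
        conv_lhs => rw [h3, wvec_eq_single]
        all_goals exact single_congr (by simp only [Fin.val_mk]; omega)
      rw [hwv]
      exact hgapply (Sum.inr _)
    · -- preserves the corner subspace
      have h1 : Submodule.map (gg : Wsp n →ₗ[ℂ] Wsp n) corner =
          Submodule.span ℂ (Set.range cE ∪ Set.range cF) := by
        have himgE : ⇑(gg : Wsp n →ₗ[ℂ] Wsp n) '' Set.range E = Set.range cE := by
          rw [← Set.range_comp]
          exact congrArg Set.range (funext fun i => hgapply (Sum.inl (Sum.inl i)))
        have himgF : ⇑(gg : Wsp n →ₗ[ℂ] Wsp n) '' Set.range F = Set.range cF := by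
          rw [← Set.range_comp]
          exact congrArg Set.range (funext fun i => hgapply (Sum.inl (Sum.inr i)))
        rw [hcornerspan, Submodule.map_span, Set.image_union, himgE, himgF]
      rw [h1, hspanC]
    · -- sends U into W_{2n-k,2n}
      rintro _ ⟨u, hu, rfl⟩
      have hfix : gg (u - pr13 n k u) = u - pr13 n k u :=
        hggmid _ (by rw [← hmidspan]; exact hmidmem u)
      have hsplit : gg u = gg (pr13 n k u) + (u - pr13 n k u) := by
        rw [← hfix, ← map_add]
        congr 1
        abel
      rw [WIJ_eq_suppIn n (2*n-k) (2*n) (by omega) (le_refl _)]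
      show (gg : Wsp n →ₗ[ℂ] Wsp n) u ∈ _
      have hsplit' : (gg : Wsp n →ₗ[ℂ] Wsp n) u = gg (pr13 n k u) + (u - pr13 n k u) := hsplit
      rw [hsplit']
      apply Submodule.add_mem
      · have hm1 : pr13 n k u ∈ Submodule.map (pr13 n k) U := ⟨u, hu, rfl⟩
        have hm2 : pr13 n k u ∈ corner := hmaple hm1
        have hm3 : (⟨pr13 n k u, hm2⟩ : ↥corner) ∈ Pc := hm1
        have hm4 := hPle hm3
        have hm5 : pr13 n k u ∈ Submodule.span ℂ (Set.range E) := by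
          have h := Submodule.mem_map_of_mem (f := corner.subtype) hm4
          rw [Submodule.map_span, ← Set.range_comp] at h
          exact h
        have hm6 : gg (pr13 n k u) ∈ Submodule.span ℂ (Set.range cE) := by
          have h := Submodule.mem_map_of_mem (f := (gg : Wsp n →ₗ[ℂ] Wsp n)) hm5
          rw [Submodule.map_span, ← Set.range_comp] at h
          rw [show (⇑(gg : Wsp n →ₗ[ℂ] Wsp n) ∘ E) = cE from
            funext fun i => hgapply (Sum.inl (Sum.inl i))] at h
          exact h
        refine Submodule.span_le.2 ?_ hm6
        rintro _ ⟨i, rfl⟩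
        apply SetLike.mem_coe.2
        apply single_mem_suppIn
        simp only [Set.mem_setOf_eq, Fin.val_mk]
        left; have := i.isLt; omega
      · rw [mem_suppIn]
        intro mm hmm
        simp only [Set.mem_setOf_eq] at hmm
        apply (mem_suppIn n Scᶜ _).1 (hmidmem u)
        simp only [Set.mem_compl_iff, hScdef, Set.mem_setOf_eq, not_not]
        have := mm.isLt; omega
  · -- easy direction
    rintro ⟨g, hg1, hg2, hg3, hg4⟩
    intro p hp q hq
    obtain ⟨u, hu, rfl⟩ := hp
    obtain ⟨v, hv, rfl⟩ := hq
    have hgmid : ∀ x ∈ suppIn n Scᶜ, g x = x := by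
      intro x hx
      rw [← span_singles_eq_suppIn] at hx
      have h := LinearMap.eqOn_span (s := (fun m => Pi.single m (1:ℂ)) '' Scᶜ)
        (f := (g : Wsp n →ₗ[ℂ] Wsp n)) (g := (LinearMap.id : Wsp n →ₗ[ℂ] Wsp n)) ?_ hx
      · simpa using h
      · rintro _ ⟨mm, hmm, rfl⟩
        simp only [Set.mem_compl_iff, hScdef, Set.mem_setOf_eq] at hmm
        show g (Pi.single mm 1) = Pi.single mm 1
        rw [← wvec_eq_single]
        exact hg2 ((mm:ℕ)+1) (by omega) (by omega)
    have key : ∀ w : Wsp n, w ∈ U → g (pr13 n k w) ∈ suppIn n {m : Fin (2*n) | (m:ℕ) < k} := by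
      intro w hw
      have hfix : g (w - pr13 n k w) = w - pr13 n k w := hgmid _ (hmidmem w)
      have hgw : g (pr13 n k w) = g w - (w - pr13 n k w) := by
        rw [← hfix, ← map_sub]
        congr 1
        abel
      have mem1 : g (pr13 n k w) ∈ suppIn n Sc := by
        rw [← hcorner]
        rw [← hg3]
        refine ⟨pr13 n k w, ?_, rfl⟩
        rw [hcorner]
        exact hpr13mem w
      have mem2 : g (pr13 n k w) ∈ suppIn n {m : Fin (2*n) | (m:ℕ) < 2*n - k} := by
        rw [hgw, mem_suppIn]
        intro mm hmm
        simp only [Set.mem_setOf_eq, not_lt] at hmm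
        show g w mm - (w - pr13 n k w) mm = 0
        have hz1 : g w mm = 0 := by
          have hmem : g w ∈ WIJ n (2*n-k) (2*n) := hg4 ⟨w, hw, rfl⟩
          rw [WIJ_eq_suppIn n (2*n-k) (2*n) (by omega) (le_refl _), mem_suppIn] at hmem
          apply hmem
          simp only [Set.mem_setOf_eq]
          have := mm.isLt; omega
        have hz2 : (w - pr13 n k w) mm = 0 := by
          apply (mem_suppIn n Scᶜ _).1 (hmidmem w)
          simp only [Set.mem_compl_iff, hScdef, Set.mem_setOf_eq, not_not]
          right; exact hmm
        rw [hz1, hz2, sub_self]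
      rw [mem_suppIn]
      intro mm hmm
      simp only [Set.mem_setOf_eq, not_lt] at hmm
      by_cases hcase : (mm:ℕ) < 2*n - k
      · apply (mem_suppIn n Sc _).1 mem1
        simp only [hScdef, Set.mem_setOf_eq]
        omega
      · apply (mem_suppIn n _ _).1 mem2
        simp only [Set.mem_setOf_eq]
        omega
    have hval : sform n (g (pr13 n k u)) (g (pr13 n k v)) = 0 := by
      apply sform_eq_zero_of_supp
      intro i
      by_cases hi : (i:ℕ) < k
      · refine Or.inr ((mem_suppIn n _ _).1 (key v hv) (pidx i) ?_)
        simp only [Set.mem_setOf_eq, pidx, Fin.val_mk, not_lt]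
        have := i.isLt; omega
      · exact Or.inl ((mem_suppIn n _ _).1 (key u hu) i (by simpa using hi))
    rw [← hg1]
    exact hval

end
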